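/- The FD algorithm is an m-approximation: if P is a shortest s–t path with respect to arc weights w_j = sum_{i=1}^m p_{ij}, then any dense flow shop schedule of the jobs of P has makespan at most m times the optimal makespan of Fm|shortest path|C_max. -/
import Mathlib


/-! STATEMENT 10: The FD algorithm is an `m`-approximation for
`Fm|shortest path|C_max`. -/

namespace FD

variable {V A : Type}

/-- `IsChain tail head u P v`: the list of arcs `P` forms a directed path from
`u` to `v` in the digraph described by `tail` and `head`. -/
def IsChain (tail head : A → V) : V → List A → V → Prop
  | u, [], v => u = v
  | u, a :: r, v => tail a = u ∧ IsChain tail head (head a) r v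

/-- Feasibility of a flow shop schedule (start times `S`) of the jobs given by
the arc list `L`, with processing times `p i a` on machine `i`. -/
def FeasSched (m : ℕ) (p : Fin m → A → ℝ) (L : List A)
    (S : Fin m → Fin L.length → ℝ) : Prop :=
  (∀ i j, 0 ≤ S i j) ∧
  (∀ (i : Fin m) (h : (i : ℕ) + 1 < m) (j : Fin L.length),
    S i j + p i (L.get j) ≤ S ⟨(i : ℕ) + 1, h⟩ j) ∧
  (∀ (i : Fin m) (j k : Fin L.length), j ≠ k →
    S i j + p i (L.get j) ≤ S i k ∨ S i k + p i (L.get k) ≤ S i j)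

/-- Density: whenever machine `i` is idle at time `t`, no job is available for
processing on machine `i` at time `t`. -/
def DenseSched (m : ℕ) (p : Fin m → A → ℝ) (L : List A)
    (S : Fin m → Fin L.length → ℝ) : Prop :=
  ∀ (i : Fin m) (t : ℝ), 0 ≤ t →
    (∀ j, ¬ (S i j ≤ t ∧ t < S i j + p i (L.get j))) →
    ∀ j, t < S i j →
      ¬ ((i : ℕ) = 0 ∨
          S ⟨(i : ℕ) - 1, Nat.lt_of_le_of_lt (Nat.sub_le _ _) i.isLt⟩ j
            + p ⟨(i : ℕ) - 1, Nat.lt_of_le_of_lt (Nat.sub_le _ _) i.isLt⟩ (L.get j) ≤ t)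

/-- `C` is the makespan of the schedule `S` of the jobs of `L`. -/
def MakespanIs (m : ℕ) (p : Fin m → A → ℝ) (L : List A)
    (S : Fin m → Fin L.length → ℝ) (C : ℝ) : Prop :=
  (∀ i j, S i j + p i (L.get j) ≤ C) ∧
  (C = 0 ∨ ∃ i j, C = S i j + p i (L.get j))

lemma list_sum_map' (f : A → ℝ) (L : List A) :
    (L.map f).sum = ∑ j : Fin L.length, f (L.get j) := by
  induction L with
  | nil => simp
  | cons a L ih =>
    rw [List.map_cons, List.sum_cons, ih]
    show _ = ∑ j : Fin (L.length + 1), f ((a :: L).get j)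
    rw [Fin.sum_univ_succ]
    simp


/-- If `P` is a shortest `s–t` path for the arc weights `w a = ∑ i, p i a`,
then the makespan `C` of any dense flow shop schedule of the jobs of `P` is at
most `m` times the makespan `C'` of any feasible solution `(Q, S')` of
`Fm|shortest path|C_max`; in particular `C ≤ m · OPT`. -/
theorem fd_m_approximation (m : ℕ) (hm : 0 < m)
    (tail head : A → V) (s t : V)
    (p : Fin m → A → ℝ) (hp : ∀ i a, 0 ≤ p i a)
    (P : List A) (hP : IsChain tail head s P t)
    (hshort : ∀ R : List A, IsChain tail head s R t →
      (P.map fun a => ∑ i, p i a).sum ≤ (R.map fun a => ∑ i, p i a).sum)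
    (S : Fin m → Fin P.length → ℝ)
    (hfeas : FeasSched m p P S) (hdense : DenseSched m p P S)
    (C : ℝ) (hC : MakespanIs m p P S C)
    (Q : List A) (hQ : IsChain tail head s Q t)
    (S' : Fin m → Fin Q.length → ℝ) (hfeas' : FeasSched m p Q S')
    (C' : ℝ) (hC' : MakespanIs m p Q S' C') :
    C ≤ m * C' := by
  obtain ⟨hS0, hmach, hdisj⟩ := hfeas
  obtain ⟨hCub, hCex⟩ := hC
  obtain ⟨hS0', hmach', hdisj'⟩ := hfeas'
  obtain ⟨hCub', hCex'⟩ := hC'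
  have hC'0 : 0 ≤ C' := by
    rcases hCex' with h | ⟨i, j, h⟩
    · simp [h]
    · rw [h]; exact add_nonneg (hS0' i j) (hp i _)
  -- Step B: per-machine load bound for the schedule S' of Q
  have hmachine : ∀ i : Fin m, ∑ j : Fin Q.length, p i (Q.get j) ≤ C' := by
    intro i
    set f : Fin Q.length → Set ℝ := fun j => Set.Ico (S' i j) (S' i j + p i (Q.get j)) with hf
    have hdis : (((Finset.univ : Finset (Fin Q.length)) : Set (Fin Q.length))).PairwiseDisjoint f := by
      intro j _ k _ hjk
      rw [Function.onFun, hf, Set.Ico_disjoint_Ico]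
      rcases hdisj' i j k hjk with h | h
      · exact (min_le_left _ _).trans (h.trans (le_max_right _ _))
      · exact (min_le_right _ _).trans (h.trans (le_max_left _ _))
    have hmeas := MeasureTheory.measure_biUnion_finset (μ := MeasureTheory.volume) hdis
      (fun j _ => measurableSet_Ico)
    have hsub : (⋃ j ∈ (Finset.univ : Finset (Fin Q.length)), f j) ⊆ Set.Ico 0 C' := by
      intro x hx
      simp only [Finset.mem_univ, Set.iUnion_true, Set.mem_iUnion, hf, Set.mem_Ico] at hx
      obtain ⟨j, hx1, hx2⟩ := hx
      exact ⟨(hS0' i j).trans hx1, hx2.trans_le (hCub' i j)⟩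
    have h1 : ∑ j : Fin Q.length, MeasureTheory.volume (f j) ≤ ENNReal.ofReal C' := by
      rw [← hmeas]
      calc MeasureTheory.volume (⋃ j ∈ (Finset.univ : Finset (Fin Q.length)), f j)
          ≤ MeasureTheory.volume (Set.Ico (0:ℝ) C') := MeasureTheory.measure_mono hsub
        _ = ENNReal.ofReal C' := by rw [Real.volume_Ico, sub_zero]
    have h2 : ∀ j : Fin Q.length, MeasureTheory.volume (f j) = ENNReal.ofReal (p i (Q.get j)) := by
      intro j; rw [hf]; rw [Real.volume_Ico]; ring_nf
    rw [Finset.sum_congr rfl (fun j _ => h2 j)] at h1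
    rw [← ENNReal.ofReal_sum_of_nonneg (fun j _ => hp i _)] at h1
    exact (ENNReal.ofReal_le_ofReal_iff hC'0).mp h1
  -- handle C = 0
  rcases hCex with hC0 | ⟨i₀, j₀, hCij⟩
  · rw [hC0]
    exact mul_nonneg (Nat.cast_nonneg m) hC'0
  -- Step A: [0, C) is covered by the processing intervals of the dense schedule
  have hcover : Set.Ico (0:ℝ) C ⊆
      ⋃ ij : Fin m × Fin P.length,
        Set.Ico (S ij.1 ij.2) (S ij.1 ij.2 + p ij.1 (P.get ij.2)) := by
    intro τ hτ
    obtain ⟨ht0, htC⟩ := hτ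
    by_contra hcon
    simp only [Set.mem_iUnion, Set.mem_Ico, not_exists] at hcon
    have hidle : ∀ (i : Fin m) j, ¬(S i j ≤ τ ∧ τ < S i j + p i (P.get j)) := by
      intro i j h
      exact hcon (i, j) ⟨h.1, h.2⟩
    have key : ∀ n (i : Fin m), (i : ℕ) ≤ n → ∀ j, τ < S i j → False := by
      intro n
      induction n with
      | zero =>
        intro i hi j hij
        exact hdense i τ ht0 (hidle i) j hij (Or.inl (Nat.le_zero.mp hi))
      | succ n ih =>
        intro i hi j hij
        have hd := hdense i τ ht0 (hidle i) j hij
        by_cases h0 : (i : ℕ) = 0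
        · exact hd (Or.inl h0)
        · set i' : Fin m := ⟨(i : ℕ) - 1, Nat.lt_of_le_of_lt (Nat.sub_le _ _) i.isLt⟩ with hi'
          have hnf : ¬(S i' j + p i' (P.get j) ≤ τ) := fun h => hd (Or.inr h)
          push_neg at hnf
          by_cases hSle : S i' j ≤ τ
          · exact hidle i' j ⟨hSle, hnf⟩
          · push_neg at hSle
            exact ih i' (by simp only [hi']; omega) j hSle
    have hts : τ < S i₀ j₀ := by
      by_contra h
      push_neg at h
      exact hidle i₀ j₀ ⟨h, hCij ▸ htC⟩
    exact key m i₀ (le_of_lt i₀.isLt) j₀ hts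
  -- deduce C ≤ total work of P
  have hCbound : C ≤ ∑ ij : Fin m × Fin P.length, p ij.1 (P.get ij.2) := by
    have h1 : ENNReal.ofReal C ≤
        ∑ ij : Fin m × Fin P.length, ENNReal.ofReal (p ij.1 (P.get ij.2)) := by
      calc ENNReal.ofReal C = MeasureTheory.volume (Set.Ico (0:ℝ) C) := by
            rw [Real.volume_Ico, sub_zero]
        _ ≤ MeasureTheory.volume (⋃ ij : Fin m × Fin P.length,
              Set.Ico (S ij.1 ij.2) (S ij.1 ij.2 + p ij.1 (P.get ij.2))) :=
            MeasureTheory.measure_mono hcover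
        _ ≤ ∑' ij : Fin m × Fin P.length, MeasureTheory.volume
              (Set.Ico (S ij.1 ij.2) (S ij.1 ij.2 + p ij.1 (P.get ij.2))) :=
            MeasureTheory.measure_iUnion_le _
        _ = ∑ ij : Fin m × Fin P.length, ENNReal.ofReal (p ij.1 (P.get ij.2)) := by
            rw [tsum_fintype]
            refine Finset.sum_congr rfl (fun ij _ => ?_)
            rw [Real.volume_Ico]; ring_nf
    rw [← ENNReal.ofReal_sum_of_nonneg (fun ij _ => hp _ _)] at h1
    exact (ENNReal.ofReal_le_ofReal_iff
      (Finset.sum_nonneg (fun ij _ => hp _ _))).mp h1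
  calc C ≤ ∑ ij : Fin m × Fin P.length, p ij.1 (P.get ij.2) := hCbound
    _ = ∑ j : Fin P.length, ∑ i : Fin m, p i (P.get j) := by
        rw [Fintype.sum_prod_type]; exact Finset.sum_comm
    _ = (P.map fun a => ∑ i, p i a).sum := (list_sum_map' (fun a => ∑ i, p i a) P).symm
    _ ≤ (Q.map fun a => ∑ i, p i a).sum := hshort Q hQ
    _ = ∑ j : Fin Q.length, ∑ i : Fin m, p i (Q.get j) := list_sum_map' (fun a => ∑ i, p i a) Q
    _ = ∑ i : Fin m, ∑ j : Fin Q.length, p i (Q.get j) := Finset.sum_comm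
    _ ≤ ∑ _i : Fin m, C' := Finset.sum_le_sum (fun i _ => hmachine i)
    _ = m * C' := by simp [mul_comm]


end FD
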